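/- Let P be a k×k permutation matrix and let t be a positive integer. Suppose that ex(n,P)/n tends to a real number c_P as n → ∞ and that S_P(n)^{1/n} tends to a real number s_P as n → ∞. Then s_P ≤ 15^{c_P/t} · (t!)^{1/t} · c_P. -/

import Mathlib

open Filter

noncomputable section

/-- An `n × n` 0-1 matrix `A` contains the `k × k` pattern `P` if there are strictly
increasing rows and columns selecting a submatrix that dominates `P`. -/
def Contains {k n : ℕ} (P : Matrix (Fin k) (Fin k) Bool)
    (A : Matrix (Fin n) (Fin n) Bool) : Prop :=
  ∃ r : Fin k → Fin n, ∃ c : Fin k → Fin n,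
    StrictMono r ∧ StrictMono c ∧ ∀ i j, P i j = true → A (r i) (c j) = true

/-- `A` avoids the pattern `P`. -/
def Avoids {k n : ℕ} (P : Matrix (Fin k) (Fin k) Bool)
    (A : Matrix (Fin n) (Fin n) Bool) : Prop := ¬ Contains P A

/-- The permutation matrix of a permutation. -/
def permMatrix {n : ℕ} (σ : Equiv.Perm (Fin n)) : Matrix (Fin n) (Fin n) Bool :=
  fun i j => decide (σ i = j)

/-- `A` is a permutation matrix. -/
def IsPermMatrix {n : ℕ} (A : Matrix (Fin n) (Fin n) Bool) : Prop :=
  ∃ σ : Equiv.Perm (Fin n), A = permMatrix σ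

/-- Number of ones of a 0-1 matrix. -/
def numOnes {m n : ℕ} (A : Matrix (Fin m) (Fin n) Bool) : ℕ :=
  (Finset.univ.filter fun p : Fin m × Fin n => A p.1 p.2 = true).card

/-- `SW P n = S_P(n)`, the number of `n × n` permutation matrices avoiding `P`. -/
def SW {k : ℕ} (P : Matrix (Fin k) (Fin k) Bool) (n : ℕ) : ℕ :=
  Nat.card {A : Matrix (Fin n) (Fin n) Bool // IsPermMatrix A ∧ Avoids P A}

/-- `exFH P n = ex(n, P)`, the maximum number of ones in an `n × n` 0-1 matrix
avoiding `P`. -/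
def exFH {k : ℕ} (P : Matrix (Fin k) (Fin k) Bool) (n : ℕ) : ℕ :=
  sSup {m : ℕ | ∃ A : Matrix (Fin n) (Fin n) Bool, Avoids P A ∧ numOnes A = m}

/-- `F c = inf over positive integers t of (t!)^(1/t) * 15^(c/t) / c`. -/
def F (c : ℝ) : ℝ :=
  ⨅ t : ℕ+, ((t : ℕ).factorial : ℝ) ^ ((1 : ℝ) / (t : ℕ)) * (15 : ℝ) ^ (c / (t : ℕ)) / c

/-- The block (among `n` consecutive blocks of length `t`) containing a given
index of `Fin (t * n)`. -/
def blockOf {t n : ℕ} (ht : 0 < t) (i : Fin (t * n)) : Fin n :=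
  ⟨(i : ℕ) / t, by
    rw [Nat.div_lt_iff_lt_mul ht]
    exact lt_of_lt_of_le i.isLt (le_of_eq (mul_comm t n))⟩

/-- The `t`-contraction of an `(t*n) × (t*n)` 0-1 matrix: entry `(a,b)` is 1 iff
the block `I_a × I_b` contains a one. -/
def contMat {t n : ℕ} (ht : 0 < t) (A : Matrix (Fin (t * n)) (Fin (t * n)) Bool) :
    Matrix (Fin n) (Fin n) Bool :=
  fun a b => @decide (∃ i j, blockOf ht i = a ∧ blockOf ht j = b ∧ A i j = true)
    (@Fintype.decidableExistsFintype _ _ (fun _ => Fintype.decidableExistsFintype) _)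

end

noncomputable section SWProof
open Finset

/-- number of avoiding matrices -/
def MA {k : ℕ} (P : Matrix (Fin k) (Fin k) Bool) (n : ℕ) : ℕ :=
  Nat.card {A : Matrix (Fin n) (Fin n) Bool // Avoids P A}

variable {k : ℕ} {P : Matrix (Fin k) (Fin k) Bool}

lemma permMatrix_injective {n : ℕ} : Function.Injective (permMatrix (n := n)) := by
  intro σ τ h
  ext i : 1
  have := congrFun (congrFun h i) (σ i)
  simp [permMatrix] at this
  exact this.symm

lemma sw_eq_card_perm (n : ℕ) :
    SW P n = Nat.card {σ : Equiv.Perm (Fin n) // Avoids P (permMatrix σ)} := by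
  apply Nat.card_congr ((Equiv.ofBijective
    (fun σ : {σ : Equiv.Perm (Fin n) // Avoids P (permMatrix σ)} =>
      (⟨permMatrix σ.1, ⟨σ.1, rfl⟩, σ.2⟩ :
        {A : Matrix (Fin n) (Fin n) Bool // IsPermMatrix A ∧ Avoids P A})) ?_).symm)
  constructor
  · intro σ τ h
    exact Subtype.ext (permMatrix_injective (congrArg Subtype.val h))
  · rintro ⟨A, ⟨σ, rfl⟩, hav⟩
    exact ⟨⟨σ, hav⟩, rfl⟩

lemma isPermMatrix_iff {n : ℕ} {A : Matrix (Fin n) (Fin n) Bool} (σ : Equiv.Perm (Fin n))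
    (h : A = permMatrix σ) : ∀ i j, A i j = true ↔ σ i = j := by
  subst h; intro i j; simp [permMatrix]

lemma blockOf_lt_of_lt {t n : ℕ} (ht : 0 < t) {i j : Fin (t * n)}
    (h : blockOf ht i < blockOf ht j) : i < j := by
  by_contra hc
  push_neg at hc
  exact absurd (Nat.div_le_div_right (c := t) (Fin.le_iff_val_le_val.1 hc)) (not_le.2 h)

lemma contract_avoids {t n : ℕ} (ht : 0 < t) (hP : IsPermMatrix P)
    {A : Matrix (Fin (t * n)) (Fin (t * n)) Bool} (hA : Avoids P A) :
    Avoids P (contMat ht A) := by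
  obtain ⟨π, hπ⟩ := hP
  rintro ⟨r, c, hr, hc, hent⟩
  have key : ∀ i : Fin k, ∃ u v : Fin (t * n),
      blockOf ht u = r i ∧ blockOf ht v = c (π i) ∧ A u v = true := by
    intro i
    have := hent i (π i) (((isPermMatrix_iff π hπ) i (π i)).2 rfl)
    simpa [contMat] using this
  choose u v hu hv hA1 using key
  refine hA ⟨u, fun j => v (π.symm j), ?_, ?_, ?_⟩
  · intro i i' hii
    exact blockOf_lt_of_lt ht (by rw [hu, hu]; exact hr hii)
  · intro j j' hjj
    refine blockOf_lt_of_lt ht ?_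
    rw [hv, hv, π.apply_symm_apply, π.apply_symm_apply]
    exact hc hjj
  · intro i j hij
    have hj : π i = j := ((isPermMatrix_iff π hπ) i j).1 hij
    subst hj
    show A (u i) (v (π.symm (π i))) = true
    rw [π.symm_apply_apply]
    exact hA1 i

/-- Padding a matrix with zeros. -/
def padMat {n m : ℕ} (B : Matrix (Fin n) (Fin n) Bool) : Matrix (Fin m) (Fin m) Bool :=
  fun i j => if h : (i : ℕ) < n ∧ (j : ℕ) < n then B ⟨i, h.1⟩ ⟨j, h.2⟩ else false

lemma pad_avoids {n m : ℕ} (hP : IsPermMatrix P) {B : Matrix (Fin n) (Fin n) Bool}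
    (hB : Avoids P B) : Avoids P (padMat (m := m) B) := by
  obtain ⟨π, hπ⟩ := hP
  rintro ⟨r, c, hr, hc, hent⟩
  have hrow : ∀ i : Fin k, (r i : ℕ) < n ∧ (c (π i) : ℕ) < n := by
    intro i
    have := hent i (π i) (((isPermMatrix_iff π hπ) i (π i)).2 rfl)
    by_contra hcon
    simp [padMat, hcon] at this
  refine hB ⟨fun i => ⟨r i, (hrow i).1⟩, fun j => ⟨c j, ?_⟩, ?_, ?_, ?_⟩
  · have := (hrow (π.symm j)).2
    rwa [π.apply_symm_apply] at this
  · intro i i' h; exact Fin.mk_lt_mk.2 (hr h)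
  · intro j j' h; exact Fin.mk_lt_mk.2 (hc h)
  · intro i j hij
    have := hent i j hij
    simp only [padMat] at this
    split at this
    · exact this
    · simp at this

lemma padMat_injective {n m : ℕ} (h : n ≤ m) :
    Function.Injective (padMat (n := n) (m := m)) := by
  intro B B' hBB
  ext i j
  have := congrFun (congrFun hBB ⟨i, lt_of_lt_of_le i.isLt h⟩) ⟨j, lt_of_lt_of_le j.isLt h⟩
  simpa [padMat, i.isLt, j.isLt] using this

lemma MA_mono (hP : IsPermMatrix P) {n m : ℕ} (h : n ≤ m) : MA P n ≤ MA P m := by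
  apply Nat.card_le_card_of_injective
    (fun B : {A : Matrix (Fin n) (Fin n) Bool // Avoids P A} =>
      (⟨padMat B.1, pad_avoids hP B.2⟩ : {A : Matrix (Fin m) (Fin m) Bool // Avoids P A}))
  intro B B' hBB
  exact Subtype.ext (padMat_injective h (congrArg Subtype.val hBB))

/-- index inside a block -/
def idx {t n : ℕ} (a : Fin n) (o : Fin t) : Fin (t * n) :=
  ⟨t * (a : ℕ) + (o : ℕ), by
    have h1 : (a : ℕ) + 1 ≤ n := a.isLt
    calc t * (a : ℕ) + (o : ℕ) < t * (a : ℕ) + t := by omega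
    _ = t * ((a : ℕ) + 1) := by ring
    _ ≤ t * n := Nat.mul_le_mul_left t h1⟩

def offOf {t n : ℕ} (ht : 0 < t) (i : Fin (t * n)) : Fin t :=
  ⟨(i : ℕ) % t, Nat.mod_lt _ ht⟩

lemma blockOf_idx {t n : ℕ} (ht : 0 < t) (a : Fin n) (o : Fin t) :
    blockOf ht (idx a o) = a := by
  apply Fin.ext
  show (t * (a : ℕ) + (o : ℕ)) / t = a
  rw [Nat.mul_add_div ht, Nat.div_eq_of_lt o.isLt, add_zero]

lemma offOf_idx {t n : ℕ} (ht : 0 < t) (a : Fin n) (o : Fin t) :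
    offOf ht (idx a o) = o := by
  apply Fin.ext
  show (t * (a : ℕ) + (o : ℕ)) % t = o
  rw [Nat.mul_add_mod, Nat.mod_eq_of_lt o.isLt]

lemma idx_blockOf_offOf {t n : ℕ} (ht : 0 < t) (i : Fin (t * n)) :
    idx (blockOf ht i) (offOf ht i) = i := by
  apply Fin.ext
  show t * ((i : ℕ) / t) + (i : ℕ) % t = i
  exact Nat.div_add_mod (i : ℕ) t

/-- the 15 possible nonzero 2×2 blocks -/
def Q2 : Type := {q : Fin 2 → Fin 2 → Bool // q ≠ fun _ _ => false}

instance : Fintype Q2 := by unfold Q2; infer_instance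

lemma card_Q2 : Nat.card Q2 = 15 := by
  rw [Nat.card_eq_fintype_card]
  decide

lemma numOnes_le_sq {n : ℕ} (A : Matrix (Fin n) (Fin n) Bool) : numOnes A ≤ n * n := by
  calc numOnes A ≤ Finset.univ.card := Finset.card_filter_le _ _
  _ = n * n := by simp

lemma bddAbove_exSet (n : ℕ) :
    BddAbove {m : ℕ | ∃ A : Matrix (Fin n) (Fin n) Bool, Avoids P A ∧ numOnes A = m} := by
  refine ⟨n * n, ?_⟩
  rintro m ⟨A, _, rfl⟩
  exact numOnes_le_sq A

lemma numOnes_le_exFH {n : ℕ} {A : Matrix (Fin n) (Fin n) Bool} (hA : Avoids P A) :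
    numOnes A ≤ exFH P n :=
  le_csSup (bddAbove_exSet n) ⟨A, hA, rfl⟩

lemma card_fiber_le {m : ℕ} (hP : IsPermMatrix P) (C : Matrix (Fin m) (Fin m) Bool) :
    Nat.card {A : {A : Matrix (Fin (2 * m)) (Fin (2 * m)) Bool // Avoids P A} //
      contMat two_pos A.1 = C} ≤ 15 ^ numOnes C := by
  classical
  have key : Nat.card ({p : Fin m × Fin m // C p.1 p.2 = true} → Q2) = 15 ^ numOnes C := by
    rw [Nat.card_eq_fintype_card, Fintype.card_fun]
    have h1 : Fintype.card Q2 = 15 := by rw [← Nat.card_eq_fintype_card, card_Q2]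
    have h2 : Fintype.card {p : Fin m × Fin m // C p.1 p.2 = true} = numOnes C := by
      rw [Fintype.card_subtype]; rfl
    rw [h1, h2]
  rw [← key]
  apply Nat.card_le_card_of_injective
    (fun A => fun p => (⟨fun o o' => A.1.1 (idx p.1.1 o) (idx p.1.2 o'), by
      have hC : contMat two_pos A.1.1 p.1.1 p.1.2 = true := by rw [A.2]; exact p.2
      have : ∃ i j, blockOf two_pos i = p.1.1 ∧ blockOf two_pos j = p.1.2 ∧
          A.1.1 i j = true := by simpa [contMat] using hC
      obtain ⟨i, j, hi, hj, hij⟩ := this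
      intro hfun
      have h2 := congrFun (congrFun hfun (offOf two_pos i)) (offOf two_pos j)
      rw [← hi, ← hj, idx_blockOf_offOf, idx_blockOf_offOf] at h2
      rw [hij] at h2
      exact Bool.true_eq_false.mp h2⟩ : Q2))
  intro A A' hAA
  have hent : ∀ i j, A.1.1 i j = A'.1.1 i j := by
    intro i j
    by_cases hC : C (blockOf two_pos i) (blockOf two_pos j) = true
    · have := congrFun hAA ⟨(blockOf two_pos i, blockOf two_pos j), hC⟩
      have h2 := congrFun (congrFun (congrArg Subtype.val this) (offOf two_pos i))
        (offOf two_pos j)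
      simpa [idx_blockOf_offOf] using h2
    · have hfalse : ∀ (B : {A : Matrix (Fin (2 * m)) (Fin (2 * m)) Bool // Avoids P A})
          (hB : contMat two_pos B.1 = C), B.1 i j = false := by
        intro B hB
        by_contra hne
        have hone : B.1 i j = true := by
          cases hb : B.1 i j
          · exact absurd hb hne
          · rfl
        apply hC
        rw [← hB]
        simp only [contMat, decide_eq_true_eq]
        exact ⟨i, j, rfl, rfl, hone⟩
      rw [hfalse A.1 A.2, hfalse A'.1 A'.2]
  exact Subtype.ext (Subtype.ext (by ext i j; exact hent i j))

lemma klazar_step (hP : IsPermMatrix P) (m : ℕ) :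
    MA P (2 * m) ≤ MA P m * 15 ^ exFH P m := by
  classical
  set f : {A : Matrix (Fin (2 * m)) (Fin (2 * m)) Bool // Avoids P A} →
      {C : Matrix (Fin m) (Fin m) Bool // Avoids P C} :=
    fun A => ⟨contMat two_pos A.1, contract_avoids two_pos hP A.2⟩ with hf
  have hMA : MA P (2 * m) = Nat.card (Σ C : {C : Matrix (Fin m) (Fin m) Bool // Avoids P C},
      {A // f A = C}) :=
    (Nat.card_congr (Equiv.sigmaFiberEquiv f)).symm
  rw [hMA]
  letI : Fintype {C : Matrix (Fin m) (Fin m) Bool // Avoids P C} := Fintype.ofFinite _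
  letI : ∀ C : {C : Matrix (Fin m) (Fin m) Bool // Avoids P C}, Fintype {A // f A = C} :=
    fun C => Fintype.ofFinite _
  rw [Nat.card_eq_fintype_card, Fintype.card_sigma]
  have hterm : ∀ C : {C : Matrix (Fin m) (Fin m) Bool // Avoids P C},
      Fintype.card {A // f A = C} ≤ 15 ^ exFH P m := by
    intro C
    calc Fintype.card {A // f A = C} = Nat.card {A // contMat two_pos (Subtype.val A) = C.1} := by
          rw [← Nat.card_eq_fintype_card]
          apply Nat.card_congr
          apply Equiv.subtypeEquivRight
          intro A
          constructor
          · intro h; exact congrArg Subtype.val h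
          · intro h; exact Subtype.ext h
    _ ≤ 15 ^ numOnes C.1 := card_fiber_le hP C.1
    _ ≤ 15 ^ exFH P m := Nat.pow_le_pow_right (by norm_num) (numOnes_le_exFH C.2)
  calc ∑ C, Fintype.card {A // f A = C} ≤
      Fintype.card {C : Matrix (Fin m) (Fin m) Bool // Avoids P C} * 15 ^ exFH P m := by
        simpa using Finset.sum_le_card_nsmul Finset.univ _ _ (fun C _ => hterm C)
  _ = MA P m * 15 ^ exFH P m := by rw [MA, Nat.card_eq_fintype_card]

/-- iterated halving sum of exFH -/
def SSum {k : ℕ} (P : Matrix (Fin k) (Fin k) Bool) (n : ℕ) : ℕ :=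
  if n ≤ 1 then 0 else exFH P ((n + 1) / 2) + SSum P ((n + 1) / 2)
termination_by n
decreasing_by omega

/-- number of halving steps -/
def Tfun (n : ℕ) : ℕ := if n ≤ 1 then 0 else 1 + Tfun ((n + 1) / 2)
termination_by n
decreasing_by omega

lemma Tfun_pow_le : ∀ n, 2 ≤ n → 2 ^ Tfun n ≤ 2 * (n - 1) := by
  intro n
  induction n using Nat.strong_induction_on with
  | _ n ih =>
    intro hn
    rw [Tfun, if_neg (by omega), pow_add, pow_one]
    rcases Nat.lt_or_ge n 4 with h4 | h4
    · interval_cases n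
      · have : Tfun 1 = 0 := by rw [Tfun]; simp
        rw [show (2+1)/2 = 1 by norm_num, this]; omega
      · have : Tfun 2 = 1 := by
          rw [Tfun, if_neg (by omega), show (2+1)/2 = 1 by norm_num, Tfun]; simp
        rw [show (3+1)/2 = 2 by norm_num, this]; omega
    · have hrec := ih ((n + 1) / 2) (by omega) (by omega)
      omega

lemma MA_le_two (hP : IsPermMatrix P) (n : ℕ) (hn : n ≤ 1) : MA P n ≤ 2 := by
  interval_cases n
  · have : MA P 0 ≤ Nat.card (PUnit : Type) := by
      apply Nat.card_le_card_of_injective (fun _ => PUnit.unit)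
      intro A B _
      refine Subtype.ext ?_
      ext i j
      exact absurd i.isLt (by omega)
    simpa [Nat.card_eq_fintype_card] using this.trans (by norm_num)
  · have : MA P 1 ≤ Nat.card Bool := by
      apply Nat.card_le_card_of_injective
        (fun A : {A : Matrix (Fin 1) (Fin 1) Bool // Avoids P A} => A.1 0 0)
      intro A B h
      refine Subtype.ext ?_
      ext i j
      have hi : i = 0 := by omega
      have hj : j = 0 := by omega
      rw [hi, hj]
      exact h
    simpa [Nat.card_eq_fintype_card] using this

lemma MA_le (hP : IsPermMatrix P) : ∀ n, MA P n ≤ 2 * 15 ^ SSum P n := by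
  intro n
  induction n using Nat.strong_induction_on with
  | _ n ih =>
    rcases Nat.lt_or_ge n 2 with h2 | h2
    · refine (MA_le_two hP n (by omega)).trans ?_
      have := Nat.one_le_pow (SSum P n) 15 (by norm_num)
      omega
    · have h1 : n ≤ 2 * ((n + 1) / 2) := by omega
      have h3 : (n + 1) / 2 < n := by omega
      calc MA P n ≤ MA P (2 * ((n + 1) / 2)) := MA_mono hP h1
      _ ≤ MA P ((n + 1) / 2) * 15 ^ exFH P ((n + 1) / 2) := klazar_step hP _
      _ ≤ (2 * 15 ^ SSum P ((n + 1) / 2)) * 15 ^ exFH P ((n + 1) / 2) :=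
          Nat.mul_le_mul_right _ (ih _ h3)
      _ = 2 * 15 ^ (exFH P ((n + 1) / 2) + SSum P ((n + 1) / 2)) := by ring
      _ = 2 * 15 ^ SSum P n := by
          conv_rhs => rw [SSum, if_neg (show ¬ n ≤ 1 by omega)]

lemma SSum_le_real {a b : ℝ} (ha : 0 ≤ a) (hb : 0 ≤ b)
    (hex : ∀ m : ℕ, (exFH P m : ℝ) ≤ a * m + b) :
    ∀ n, (SSum P n : ℝ) ≤ a * (n + Tfun n) + b * Tfun n := by
  intro n
  induction n using Nat.strong_induction_on with
  | _ n ih =>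
    rcases Nat.lt_or_ge n 2 with h2 | h2
    · rw [SSum, if_pos (by omega), Tfun, if_pos (by omega)]
      push_cast
      have : (0:ℝ) ≤ n := by positivity
      nlinarith
    · have h3 : (n + 1) / 2 < n := by omega
      have hT : (Tfun n : ℝ) = 1 + Tfun ((n + 1) / 2) := by
        rw [Tfun, if_neg (by omega)]; push_cast; ring
      have hhalf : ((((n + 1) / 2 : ℕ)) : ℝ) ≤ ((n : ℝ) + 1) / 2 := by
        have := Nat.cast_div_le (α := ℝ) (m := n + 1) (n := 2)
        push_cast at this
        linarith
      rw [SSum, if_neg (by omega)]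
      push_cast
      have hrec := ih _ h3
      have hexh := hex ((n + 1) / 2)
      rw [hT]
      nlinarith [hhalf]

def rowDeg {n : ℕ} (B : Matrix (Fin n) (Fin n) Bool) (a : Fin n) : ℕ :=
  (Finset.univ.filter fun x => B a x = true).card

lemma orderIsoOfFin_congr {α : Type*} [LinearOrder α] {s s' : Finset α} (hss : s = s')
    {t : ℕ} (h : s.card = t) (h' : s'.card = t) (x : Fin t) :
    (s.orderIsoOfFin h x : α) = (s'.orderIsoOfFin h' x : α) := by subst hss; rfl

lemma card_blockfiber {t n : ℕ} (ht : 0 < t) (σ : Equiv.Perm (Fin (t * n))) (b : Fin n) :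
    (Finset.univ.filter fun i : Fin (t * n) => blockOf ht (σ i) = b).card = t := by
  classical
  rw [← Fintype.card_subtype]
  have e1 : {i : Fin (t * n) // blockOf ht (σ i) = b} ≃ {j : Fin (t * n) // blockOf ht j = b} :=
    Equiv.subtypeEquiv σ (fun i => Iff.rfl)
  have e2 : {j : Fin (t * n) // blockOf ht j = b} ≃ Fin t :=
    { toFun := fun j => offOf ht j.1
      invFun := fun o => ⟨idx b o, blockOf_idx ht b o⟩
      left_inv := fun j => Subtype.ext (by
        obtain ⟨j, hj⟩ := j
        show idx b (offOf ht j) = j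
        rw [← hj]
        exact idx_blockOf_offOf ht j)
      right_inv := fun o => offOf_idx ht b o }
  rw [Fintype.card_congr (e1.trans e2), Fintype.card_fin]

def fiberSet {t n : ℕ} (ht : 0 < t) (σ : Equiv.Perm (Fin (t * n))) (b : Fin n) :
    Finset (Fin (t * n)) :=
  Finset.univ.filter fun i => blockOf ht (σ i) = b

lemma card_fiberSet {t n : ℕ} (ht : 0 < t) (σ : Equiv.Perm (Fin (t * n))) (b : Fin n) :
    (fiberSet ht σ b).card = t := card_blockfiber ht σ b

def permH {t n : ℕ} (ht : 0 < t) (σ : Equiv.Perm (Fin (t * n))) (b : Fin n) :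
    Fin t → Fin t :=
  fun x => offOf ht (σ ((fiberSet ht σ b).orderIsoOfFin (card_fiberSet ht σ b) x))

lemma mem_fiberSet {t n : ℕ} (ht : 0 < t) (σ : Equiv.Perm (Fin (t * n))) (b : Fin n)
    {i : Fin (t * n)} (h : i ∈ fiberSet ht σ b) : blockOf ht (σ i) = b := by
  simpa [fiberSet] using h

lemma sigma_apply_eq {t n : ℕ} (ht : 0 < t) (σ : Equiv.Perm (Fin (t * n))) (b : Fin n)
    {i : Fin (t * n)} (h : i ∈ fiberSet ht σ b) :
    σ i = idx b (offOf ht (σ i)) := by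
  conv_lhs => rw [← idx_blockOf_offOf ht (σ i)]
  rw [mem_fiberSet ht σ b h]

lemma permH_injective {t n : ℕ} (ht : 0 < t) (σ : Equiv.Perm (Fin (t * n))) (b : Fin n) :
    Function.Injective (permH ht σ b) := by
  intro x y hxy
  set e := (fiberSet ht σ b).orderIsoOfFin (card_fiberSet ht σ b) with he
  have hmx := (e x).2
  have hmy := (e y).2
  have hσ : σ (e x) = σ (e y) := by
    rw [sigma_apply_eq ht σ b hmx, sigma_apply_eq ht σ b hmy]
    exact congrArg (idx b) hxy
  have : (e x : Fin (t * n)) = (e y : Fin (t * n)) := σ.injective hσ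
  exact e.injective (Subtype.ext this)

lemma count_perm_fiber {t n : ℕ} (ht : 0 < t) (B : Matrix (Fin n) (Fin n) Bool) :
    Nat.card {σ : Equiv.Perm (Fin (t * n)) // contMat ht (permMatrix σ) = B} ≤
      (∏ i : Fin (t * n), rowDeg B (blockOf ht i)) * t.factorial ^ n := by
  classical
  have hcod : Nat.card ((∀ i : Fin (t * n), {x : Fin n // B (blockOf ht i) x = true}) ×
      (Fin n → (Fin t ↪ Fin t))) = (∏ i, rowDeg B (blockOf ht i)) * t.factorial ^ n := by
    rw [Nat.card_eq_fintype_card, Fintype.card_prod, Fintype.card_pi, Fintype.card_fun,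
      Fintype.card_embedding_eq, Fintype.card_fin, Nat.descFactorial_self, Fintype.card_fin]
    congr 1
    exact Finset.prod_congr rfl fun i _ => Fintype.card_subtype _
  rw [← hcod]
  have hpf : ∀ (sA : {σ : Equiv.Perm (Fin (t * n)) // contMat ht (permMatrix σ) = B})
      (i : Fin (t * n)), B (blockOf ht i) (blockOf ht (sA.1 i)) = true := by
    intro sA i
    obtain ⟨σ, hσ⟩ := sA
    show B (blockOf ht i) (blockOf ht (σ i)) = true
    rw [← hσ]
    simp only [contMat, decide_eq_true_eq]
    exact ⟨i, σ i, rfl, rfl, by simp [permMatrix]⟩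
  apply Nat.card_le_card_of_injective
    (fun sA => (fun i => (⟨blockOf ht (sA.1 i), hpf sA i⟩ : {x : Fin n // B (blockOf ht i) x = true}),
      fun b => (⟨permH ht sA.1 b, permH_injective ht sA.1 b⟩ : Fin t ↪ Fin t)))
  intro sA tA h
  rw [Prod.mk.injEq] at h
  obtain ⟨hf, hh⟩ := h
  have hβ : ∀ i, blockOf ht (sA.1 i) = blockOf ht (tA.1 i) := by
    intro i
    exact congrArg Subtype.val (congrFun hf i)
  have hfib : ∀ b, fiberSet ht sA.1 b = fiberSet ht tA.1 b := by
    intro b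
    apply Finset.ext
    intro i
    simp [fiberSet, hβ i]
  refine Subtype.ext (Equiv.ext fun u => ?_)
  set b := blockOf ht (sA.1 u) with hb
  have humem : u ∈ fiberSet ht sA.1 b := by simp [fiberSet, hb]
  have humem' : u ∈ fiberSet ht tA.1 b := by rw [← hfib]; exact humem
  set e := (fiberSet ht sA.1 b).orderIsoOfFin (card_fiberSet ht sA.1 b) with he
  set x := e.symm ⟨u, humem⟩ with hx
  have hex : (e x : Fin (t * n)) = u := by rw [hx, OrderIso.apply_symm_apply]
  have hex' : ((fiberSet ht tA.1 b).orderIsoOfFin (card_fiberSet ht tA.1 b) x : Fin (t * n))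
      = u := by
    rw [← orderIsoOfFin_congr (hfib b) (card_fiberSet ht sA.1 b) (card_fiberSet ht tA.1 b) x]
    exact hex
  have h1 : permH ht sA.1 b x = offOf ht (sA.1 u) := by
    unfold permH
    rw [← he, hex]
  have h2 : permH ht tA.1 b x = offOf ht (tA.1 u) := by
    unfold permH
    rw [hex']
  have h3 : permH ht sA.1 b x = permH ht tA.1 b x := by
    have := congrFun hh b
    exact congrFun (congrArg (fun (E : Fin t ↪ Fin t) => (E : Fin t → Fin t)) this) x
  have hoff : offOf ht (sA.1 u) = offOf ht (tA.1 u) := by rw [← h1, h3, h2]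
  calc sA.1 u = idx b (offOf ht (sA.1 u)) := sigma_apply_eq ht sA.1 b humem
  _ = idx b (offOf ht (tA.1 u)) := by rw [hoff]
  _ = tA.1 u := (sigma_apply_eq ht tA.1 b humem').symm

lemma card_block {t n : ℕ} (ht : 0 < t) (b : Fin n) :
    (Finset.univ.filter fun j : Fin (t * n) => blockOf ht j = b).card = t := by
  exact card_blockfiber ht (Equiv.refl _) b

lemma sum_rowDeg {n : ℕ} (B : Matrix (Fin n) (Fin n) Bool) :
    ∑ a, rowDeg B a = numOnes B := by
  classical
  have e : {p : Fin n × Fin n // B p.1 p.2 = true} ≃ Σ a : Fin n, {x : Fin n // B a x = true} :=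
    { toFun := fun p => ⟨p.1.1, ⟨p.1.2, p.2⟩⟩
      invFun := fun q => ⟨(q.1, q.2.1), q.2.2⟩
      left_inv := fun p => rfl
      right_inv := fun q => rfl }
  have h1 : numOnes B = Fintype.card {p : Fin n × Fin n // B p.1 p.2 = true} :=
    (Fintype.card_subtype _).symm
  rw [h1, Fintype.card_congr e, Fintype.card_sigma]
  exact Finset.sum_congr rfl fun a _ => by rw [rowDeg, Fintype.card_subtype]

lemma prod_le_avg_pow {n : ℕ} (hn : 0 < n) (d : Fin n → ℝ) (hd : ∀ a, 0 ≤ d a) :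
    ∏ a, d a ≤ ((∑ a, d a) / n) ^ n := by
  have hn' : (n : ℝ) ≠ 0 := Nat.cast_ne_zero.2 hn.ne'
  have hw : ∑ _a : Fin n, (1 / n : ℝ) = 1 := by
    rw [Finset.sum_const, Finset.card_univ, Fintype.card_fin, nsmul_eq_mul]
    field_simp
  have key := Real.geom_mean_le_arith_mean_weighted Finset.univ (fun _ => 1 / n) d
    (fun i _ => by positivity) hw (fun i _ => hd i)
  have h1 : (∏ a, d a ^ (1 / (n : ℝ))) ^ n = ∏ a, d a := by
    rw [← Finset.prod_pow]
    apply Finset.prod_congr rfl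
    intro a _
    rw [← Real.rpow_natCast (d a ^ (1 / (n : ℝ))) n, ← Real.rpow_mul (hd a),
      one_div, inv_mul_cancel₀ hn', Real.rpow_one]
  have h2 : ∑ a, (1 / (n : ℝ)) * d a = (∑ a, d a) / n := by
    rw [← Finset.mul_sum]
    field_simp
  calc ∏ a, d a = (∏ a, d a ^ (1 / (n : ℝ))) ^ n := h1.symm
  _ ≤ ((∑ a, d a) / n) ^ n := by
      apply pow_le_pow_left₀ (Finset.prod_nonneg fun a _ => Real.rpow_nonneg (hd a) _)
      rw [← h2]
      exact key

lemma prod_rowDeg_le {t n : ℕ} (ht : 0 < t) (hn : 0 < n) {B : Matrix (Fin n) (Fin n) Bool}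
    (hB : Avoids P B) :
    ((∏ i : Fin (t * n), rowDeg B (blockOf ht i) : ℕ) : ℝ) ≤
      ((exFH P n : ℝ) / n) ^ (t * n) := by
  classical
  have hsplit : ∏ i : Fin (t * n), rowDeg B (blockOf ht i) = ∏ a : Fin n, rowDeg B a ^ t := by
    rw [Finset.prod_comp (rowDeg B) (blockOf ht)]
    have himg : Finset.univ.image (blockOf ht : Fin (t * n) → Fin n) = Finset.univ := by
      apply Finset.eq_univ_of_forall
      intro b
      exact Finset.mem_image.2 ⟨idx b ⟨0, ht⟩, Finset.mem_univ _, blockOf_idx ht b _⟩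
    rw [himg]
    exact Finset.prod_congr rfl fun b _ => by rw [card_block ht b]
  rw [hsplit]
  push_cast
  have hd : ∀ a, (0 : ℝ) ≤ (rowDeg B a : ℝ) := fun a => Nat.cast_nonneg _
  have hAM : ∏ a : Fin n, (rowDeg B a : ℝ) ≤ ((numOnes B : ℝ) / n) ^ n := by
    have := prod_le_avg_pow hn (fun a => (rowDeg B a : ℝ)) hd
    rwa [← Nat.cast_sum, sum_rowDeg] at this
  have hmono : ((numOnes B : ℝ) / n) ^ n ≤ ((exFH P n : ℝ) / n) ^ n := by
    apply pow_le_pow_left₀ (by positivity)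
    apply div_le_div_of_nonneg_right ?_ (by positivity)
    · exact_mod_cast numOnes_le_exFH hB
  calc ∏ a : Fin n, (rowDeg B a : ℝ) ^ t = (∏ a : Fin n, (rowDeg B a : ℝ)) ^ t := by
        rw [← Finset.prod_pow]
  _ ≤ (((exFH P n : ℝ) / n) ^ n) ^ t := by
      apply pow_le_pow_left₀ (Finset.prod_nonneg fun a _ => hd a)
      exact hAM.trans hmono
  _ = ((exFH P n : ℝ) / n) ^ (t * n) := by rw [← pow_mul, Nat.mul_comm]

lemma count_real (hP : IsPermMatrix P) {t n : ℕ} (ht : 0 < t) (hn : 0 < n) :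
    (SW P (t * n) : ℝ) ≤
      (MA P n : ℝ) * ((exFH P n : ℝ) / n) ^ (t * n) * (t.factorial : ℝ) ^ n := by
  classical
  letI : Fintype {C : Matrix (Fin n) (Fin n) Bool // Avoids P C} := Fintype.ofFinite _
  set g : {σ : Equiv.Perm (Fin (t * n)) // Avoids P (permMatrix σ)} →
      {C : Matrix (Fin n) (Fin n) Bool // Avoids P C} :=
    fun σ => ⟨contMat ht (permMatrix σ.1), contract_avoids ht hP σ.2⟩ with hg
  letI : ∀ C, Fintype {σ // g σ = C} := fun C => Fintype.ofFinite _
  letI : Fintype {σ : Equiv.Perm (Fin (t * n)) // Avoids P (permMatrix σ)} := Fintype.ofFinite _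
  have h0 : SW P (t * n) = ∑ C : {C : Matrix (Fin n) (Fin n) Bool // Avoids P C},
      Nat.card {σ // g σ = C} := by
    rw [sw_eq_card_perm, ← Nat.card_congr (Equiv.sigmaFiberEquiv g),
      Nat.card_eq_fintype_card, Fintype.card_sigma]
    exact Finset.sum_congr rfl fun C _ => (Nat.card_eq_fintype_card).symm
  have h1 : ∀ C : {C : Matrix (Fin n) (Fin n) Bool // Avoids P C},
      (Nat.card {σ // g σ = C} : ℝ) ≤ ((exFH P n : ℝ) / n) ^ (t * n) * (t.factorial : ℝ) ^ n := by
    intro C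
    have hinj : Nat.card {σ // g σ = C} ≤
        Nat.card {σ : Equiv.Perm (Fin (t * n)) // contMat ht (permMatrix σ) = C.1} := by
      apply Nat.card_le_card_of_injective
        (fun σ => ⟨σ.1.1, congrArg Subtype.val σ.2⟩)
      intro σ τ h
      have h2 := congrArg Subtype.val h
      exact Subtype.ext (Subtype.ext h2)
    have hbound := (count_perm_fiber ht C.1)
    have hnat : Nat.card {σ // g σ = C} ≤
        (∏ i : Fin (t * n), rowDeg C.1 (blockOf ht i)) * t.factorial ^ n :=
      hinj.trans hbound
    calc (Nat.card {σ // g σ = C} : ℝ) ≤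
        ((∏ i : Fin (t * n), rowDeg C.1 (blockOf ht i)) * t.factorial ^ n : ℕ) := by
          exact_mod_cast hnat
    _ = ((∏ i : Fin (t * n), rowDeg C.1 (blockOf ht i) : ℕ) : ℝ) * (t.factorial : ℝ) ^ n := by
          push_cast; ring
    _ ≤ ((exFH P n : ℝ) / n) ^ (t * n) * (t.factorial : ℝ) ^ n := by
          apply mul_le_mul_of_nonneg_right (prod_rowDeg_le ht hn C.2) (by positivity)
  calc (SW P (t * n) : ℝ) = ∑ C : {C : Matrix (Fin n) (Fin n) Bool // Avoids P C},
      (Nat.card {σ // g σ = C} : ℝ) := by rw [h0]; push_cast; rfl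
  _ ≤ ∑ _C : {C : Matrix (Fin n) (Fin n) Bool // Avoids P C},
      ((exFH P n : ℝ) / n) ^ (t * n) * (t.factorial : ℝ) ^ n :=
      Finset.sum_le_sum fun C _ => h1 C
  _ = (MA P n : ℝ) * ((exFH P n : ℝ) / n) ^ (t * n) * (t.factorial : ℝ) ^ n := by
      rw [Finset.sum_const, Finset.card_univ, nsmul_eq_mul, MA, Nat.card_eq_fintype_card]
      ring

lemma tendsto_const_rpow_comp {α : Type*} {F : Filter α} {a : ℝ} (ha : 0 < a) {f : α → ℝ}
    {l : ℝ} (hf : Tendsto f F (nhds l)) :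
    Tendsto (fun n => a ^ f n) F (nhds (a ^ l)) := by
  have hcont : Continuous fun x : ℝ => a ^ x := by
    have hfun : (fun x : ℝ => a ^ x) = fun x => Real.exp (Real.log a * x) := by
      funext x
      rw [Real.rpow_def_of_pos ha]
    rw [hfun]
    exact Real.continuous_exp.comp (continuous_const.mul continuous_id)
  exact (hcont.tendsto l).comp hf

lemma tendsto_Tfun_div : Tendsto (fun n : ℕ => (Tfun n : ℝ) / n) atTop (nhds 0) := by
  have hupper : ∀ n : ℕ, 2 ≤ n → (Tfun n : ℝ) ≤ 1 + Real.log n / Real.log 2 := by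
    intro n hn
    have h1 : (2 : ℝ) ^ (Tfun n : ℕ) ≤ 2 * n := by
      have h2 : (2 : ℕ) ^ Tfun n ≤ 2 * n := (Tfun_pow_le n hn).trans (by omega)
      exact_mod_cast h2
    have h3 : (Tfun n : ℝ) = Real.logb 2 ((2 : ℝ) ^ (Tfun n : ℕ)) := by
      rw [← Real.rpow_natCast, Real.logb_rpow (b := 2) (by norm_num) (by norm_num)]
    have hn0 : (0 : ℝ) < n := by positivity
    rw [h3]
    calc Real.logb 2 ((2 : ℝ) ^ (Tfun n : ℕ)) ≤ Real.logb 2 (2 * n) :=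
        Real.logb_le_logb_of_le (by norm_num) (by positivity) h1
    _ = 1 + Real.log n / Real.log 2 := by
        rw [Real.logb, Real.log_mul (by norm_num) (by positivity), add_div,
          div_self (Real.log_ne_zero_of_pos_of_ne_one (by norm_num) (by norm_num))]
  have hub : Tendsto (fun n : ℕ => (1 + Real.log n / Real.log 2) / n) atTop (nhds 0) := by
    have hlog : Tendsto (fun n : ℕ => Real.log n / n) atTop (nhds 0) :=
      (Real.isLittleO_log_id_atTop.tendsto_div_nhds_zero).comp tendsto_natCast_atTop_atTop
    have heq : (fun n : ℕ => (1 + Real.log n / Real.log 2) / n) =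
        fun n : ℕ => 1 / n + (Real.log n / n) * (1 / Real.log 2) := by
      funext n
      ring
    rw [heq]
    have h2 : Tendsto (fun n : ℕ => 1 / (n:ℝ) + (Real.log n / n) * (1 / Real.log 2)) atTop
        (nhds (0 + 0 * (1 / Real.log 2))) :=
      tendsto_one_div_atTop_nhds_zero_nat.add (hlog.mul tendsto_const_nhds)
    simpa using h2
  apply tendsto_of_tendsto_of_tendsto_of_le_of_le' tendsto_const_nhds hub
  · filter_upwards with n
    positivity
  · filter_upwards [eventually_ge_atTop 2] with n hn
    have hn0 : (0 : ℝ) < n := by positivity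
    exact div_le_div_of_nonneg_right (hupper n hn) hn0.le

lemma exFH_le_sq (m : ℕ) : exFH P m ≤ m * m := by
  apply csSup_le'
  rintro x ⟨A, _, rfl⟩
  exact numOnes_le_sq A

lemma key_eps {t : ℕ} (hP : IsPermMatrix P) (ht : 0 < t) {cP sP : ℝ}
    (hc : Tendsto (fun n : ℕ => (exFH P n : ℝ) / n) atTop (nhds cP))
    (hs : Tendsto (fun n : ℕ => (SW P n : ℝ) ^ ((1 : ℝ) / n)) atTop (nhds sP))
    {ε : ℝ} (hε : 0 < ε) :
    sP ≤ (15 : ℝ) ^ ((cP + ε) / t) * ((t.factorial : ℝ)) ^ ((1 : ℝ) / t) * cP := by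
  have hcP0 : 0 ≤ cP := ge_of_tendsto hc (.of_forall fun n => by positivity)
  set a : ℝ := cP + ε with hadef
  have ha : 0 ≤ a := by positivity
  obtain ⟨N, hN⟩ := (Metric.tendsto_atTop.mp hc) ε hε
  set M := max N 1 with hM
  set b : ℝ := (M : ℝ) * M with hbdef
  have hb : 0 ≤ b := by positivity
  have hex : ∀ m : ℕ, (exFH P m : ℝ) ≤ a * m + b := by
    intro m
    rcases le_or_gt M m with hm | hm
    · have hm1 : 1 ≤ m := le_trans (le_max_right N 1) hm
      have hm0 : (0 : ℝ) < m := by positivity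
      have hd := hN m (le_trans (le_max_left N 1) hm)
      rw [Real.dist_eq, abs_lt] at hd
      have h1 : (exFH P m : ℝ) / m < a := by rw [hadef]; linarith [hd.2]
      rw [div_lt_iff₀ hm0] at h1
      linarith
    · have h1 : (exFH P m : ℝ) ≤ (m : ℝ) * m := by exact_mod_cast exFH_le_sq m
      have h2 : (m : ℝ) ≤ M := by exact_mod_cast hm.le
      have h3 : (m : ℝ) * m ≤ b := by
        rw [hbdef]
        have : (0 : ℝ) ≤ m := by positivity
        nlinarith
      have : 0 ≤ a * m := by positivity
      linarith
  have hSS := SSum_le_real ha hb hex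
  have htn : Tendsto (fun n : ℕ => t * n) atTop atTop :=
    tendsto_atTop_mono (fun n => Nat.le_mul_of_pos_left n ht) tendsto_id
  have hsub : Tendsto (fun n : ℕ => ((SW P (t * n) : ℝ)) ^ ((1 : ℝ) / ((t * n : ℕ) : ℝ)))
      atTop (nhds sP) := hs.comp htn
  set G : ℕ → ℝ := fun n =>
    (2 : ℝ) ^ ((1 : ℝ) / ((t * n : ℕ) : ℝ)) *
      (15 : ℝ) ^ (a / t + (a + b) * ((Tfun n : ℝ) / ((t * n : ℕ) : ℝ))) *
      ((exFH P n : ℝ) / n) * ((t.factorial : ℝ)) ^ ((1 : ℝ) / (t : ℝ)) with hG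
  have he1 : Tendsto (fun n : ℕ => (1 : ℝ) / ((t * n : ℕ) : ℝ)) atTop (nhds 0) := by
    have h0 : Tendsto (fun n : ℕ => ((t * n : ℕ) : ℝ)) atTop atTop :=
      (tendsto_natCast_atTop_atTop (R := ℝ)).comp htn
    have h1 : Tendsto (fun n : ℕ => (((t * n : ℕ) : ℝ))⁻¹) atTop (nhds 0) :=
      h0.inv_tendsto_atTop
    simpa [one_div] using h1
  have he2 : Tendsto (fun n : ℕ => (Tfun n : ℝ) / ((t * n : ℕ) : ℝ)) atTop (nhds 0) := by
    have heq : (fun n : ℕ => (Tfun n : ℝ) / ((t * n : ℕ) : ℝ)) =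
        fun n : ℕ => ((Tfun n : ℝ) / n) * (1 / t) := by
      funext n
      push_cast
      ring
    rw [heq]
    have := tendsto_Tfun_div.mul (tendsto_const_nhds (x := (1 / t : ℝ)))
    simpa using this
  have hGlim : Tendsto G atTop
      (nhds ((2 : ℝ) ^ (0 : ℝ) * (15 : ℝ) ^ (a / t + (a + b) * 0) * cP *
        ((t.factorial : ℝ)) ^ ((1 : ℝ) / (t : ℝ)))) := by
    apply Tendsto.mul_const
    apply Tendsto.mul ?_ hc
    exact (tendsto_const_rpow_comp (by norm_num) he1).mul
      (tendsto_const_rpow_comp (by norm_num)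
        (tendsto_const_nhds.add (tendsto_const_nhds.mul he2)))
  have hev : ∀ᶠ n in atTop,
      ((SW P (t * n) : ℝ)) ^ ((1 : ℝ) / ((t * n : ℕ) : ℝ)) ≤ G n := by
    filter_upwards [eventually_ge_atTop 1] with n hn1
    have hn : 0 < n := hn1
    have hm0 : (0 : ℝ) < ((t * n : ℕ) : ℝ) := by
      have : 0 < t * n := Nat.mul_pos ht hn
      exact_mod_cast this
    set w : ℝ := (1 : ℝ) / ((t * n : ℕ) : ℝ) with hw
    have hw0 : 0 < w := by positivity
    have hnw : (n : ℝ) * w = 1 / t := by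
      rw [hw]
      push_cast
      field_simp
    have hmw : ((t * n : ℕ) : ℝ) * w = 1 := by
      rw [hw]
      field_simp
    -- step 1 : numeric bound
    have hMA : (MA P n : ℝ) ≤ 2 * (15 : ℝ) ^ (SSum P n : ℕ) := by
      have := MA_le hP n
      exact_mod_cast this
    have hstep1 : (SW P (t * n) : ℝ) ≤
        (2 * (15 : ℝ) ^ (SSum P n : ℕ)) * (((exFH P n : ℝ) / n) ^ (t * n) *
          ((t.factorial : ℝ)) ^ n) := by
      have h1 := count_real hP ht hn
      have h2 : (MA P n : ℝ) * ((exFH P n : ℝ) / n) ^ (t * n) * (t.factorial : ℝ) ^ n ≤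
          (2 * (15 : ℝ) ^ (SSum P n : ℕ)) * (((exFH P n : ℝ) / n) ^ (t * n) *
            ((t.factorial : ℝ)) ^ n) := by
        rw [← mul_assoc]
        apply mul_le_mul_of_nonneg_right ?_ (by positivity)
        apply mul_le_mul_of_nonneg_right hMA (by positivity)
      exact h1.trans h2
    -- step 2 : take w-th power
    have hstep2 := Real.rpow_le_rpow (by positivity) hstep1 hw0.le
    -- step 3 : expand RHS^w
    have hA : (0:ℝ) ≤ 2 * (15 : ℝ) ^ (SSum P n : ℕ) := by positivity
    have hX : (0:ℝ) ≤ ((exFH P n : ℝ) / n) ^ (t * n) := by positivity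
    have hY : (0:ℝ) ≤ ((t.factorial : ℝ)) ^ n := by positivity
    have hexp : ((2 * (15 : ℝ) ^ (SSum P n : ℕ)) * (((exFH P n : ℝ) / n) ^ (t * n) *
        ((t.factorial : ℝ)) ^ n)) ^ w =
        (2 : ℝ) ^ w * (15 : ℝ) ^ ((SSum P n : ℝ) * w) *
          ((exFH P n : ℝ) / n) * ((t.factorial : ℝ)) ^ ((1 : ℝ) / (t : ℝ)) := by
      have e1 : ((15 : ℝ) ^ (SSum P n : ℕ)) ^ w = (15 : ℝ) ^ ((SSum P n : ℝ) * w) := by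
        rw [← Real.rpow_natCast (15 : ℝ) (SSum P n), ← Real.rpow_mul (by norm_num)]
      have e2 : (((exFH P n : ℝ) / n) ^ (t * n)) ^ w = (exFH P n : ℝ) / n := by
        rw [← Real.rpow_natCast (((exFH P n : ℝ) / n)) (t * n),
          ← Real.rpow_mul (by positivity), hmw, Real.rpow_one]
      have e3 : (((t.factorial : ℝ)) ^ n) ^ w = ((t.factorial : ℝ)) ^ ((1 : ℝ) / (t : ℝ)) := by
        rw [← Real.rpow_natCast ((t.factorial : ℝ)) n, ← Real.rpow_mul (by positivity), hnw]
      rw [Real.mul_rpow hA (mul_nonneg hX hY), Real.mul_rpow hX hY,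
        Real.mul_rpow (by norm_num) (by positivity), e1, e2, e3]
      ring
    rw [hexp] at hstep2
    refine hstep2.trans ?_
    rw [hG]
    apply mul_le_mul_of_nonneg_right ?_ (by positivity)
    apply mul_le_mul_of_nonneg_right ?_ (by positivity)
    apply mul_le_mul_of_nonneg_left ?_ (by positivity)
    apply Real.rpow_le_rpow_left_iff (by norm_num : (1:ℝ) < 15) |>.2
    have h3 := mul_le_mul_of_nonneg_right (hSS n) hw0.le
    calc (SSum P n : ℝ) * w ≤ (a * (n + Tfun n) + b * Tfun n) * w := h3
    _ = a * ((n:ℝ) * w) + (a + b) * ((Tfun n : ℝ) * w) := by ring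
    _ = a / t + (a + b) * ((Tfun n : ℝ) / ((t * n : ℕ) : ℝ)) := by
        rw [hnw, hw]
        ring
  have hfinal := le_of_tendsto_of_tendsto hsub hGlim hev
  calc sP ≤ (2 : ℝ) ^ (0 : ℝ) * (15 : ℝ) ^ (a / t + (a + b) * 0) * cP *
      ((t.factorial : ℝ)) ^ ((1 : ℝ) / (t : ℝ)) := hfinal
  _ = (15 : ℝ) ^ ((cP + ε) / t) * ((t.factorial : ℝ)) ^ ((1 : ℝ) / t) * cP := by
      rw [Real.rpow_zero, mul_zero, add_zero, hadef]
      ring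

end SWProof

theorem stanley_wilf_le_of_t {k : ℕ} (P : Matrix (Fin k) (Fin k) Bool)
    (hP : IsPermMatrix P) (t : ℕ) (ht : 0 < t) (cP sP : ℝ)
    (hc : Tendsto (fun n : ℕ => (exFH P n : ℝ) / n) atTop (nhds cP))
    (hs : Tendsto (fun n : ℕ => (SW P n : ℝ) ^ ((1 : ℝ) / n)) atTop (nhds sP)) :
    sP ≤ (15 : ℝ) ^ (cP / t) * ((t.factorial : ℝ)) ^ ((1 : ℝ) / t) * cP := by
  have key : ∀ ε : ℝ, 0 < ε →
      sP ≤ (15 : ℝ) ^ ((cP + ε) / t) * ((t.factorial : ℝ)) ^ ((1 : ℝ) / t) * cP :=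
    fun ε hε => key_eps hP ht hc hs hε
  have hcont : Tendsto
      (fun ε : ℝ => (15 : ℝ) ^ ((cP + ε) / t) * ((t.factorial : ℝ)) ^ ((1 : ℝ) / t) * cP)
      (nhdsWithin 0 (Set.Ioi 0))
      (nhds ((15 : ℝ) ^ ((cP + 0) / t) * ((t.factorial : ℝ)) ^ ((1 : ℝ) / t) * cP)) := by
    apply Tendsto.mul_const
    apply Tendsto.mul_const
    apply tendsto_const_rpow_comp (by norm_num)
    have h1 : Tendsto (fun ε : ℝ => (cP + ε) / t) (nhds 0) (nhds ((cP + 0) / t)) :=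
      ((continuous_const.add continuous_id).div_const _).tendsto 0
    exact h1.mono_left nhdsWithin_le_nhds
  have hfin := ge_of_tendsto hcont
    (eventually_nhdsWithin_of_forall fun ε hε => key ε hε)
  rwa [add_zero] at hfin
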